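/- arXiv:1110.3556 — 3 statements merged into one kernel-verified Lean document; each statement's English description precedes it below -/
import Mathlib

section
/- Fix λ > 0, n ≥ k ≥ 1, an m×n matrix Y and an m×p matrix X, and let (S⁽ʲ⁾, V⁽ʲ⁾), j = 1, 2, …, be a sequence in ℝ^{p×k} × 𝕆^{n×k} such that for every j, S⁽ʲ⁺¹⁾ globally minimizes S ↦ ½‖Y V⁽ʲ⁾ − XS‖²_F + λ‖S‖_{2,1} over ℝ^{p×k}, and V⁽ʲ⁺¹⁾ globally maximizes V ↦ tr((Y′XS⁽ʲ⁺¹⁾)′V) over 𝕆^{n×k}. Suppose additionally that for every (S, V) ∈ ℝ^{p×k} × 𝕆^{n×k} that is not a local minimum of F, one has F(S, V) > min over S̃ ∈ ℝ^{p×k} of F(S̃, V). Then any accumulation point of the sequence (S⁽ʲ⁾, V⁽ʲ⁾) is a local minimum of F, and F(S⁽ʲ⁾, V⁽ʲ⁾) converges monotonically (nonincreasing) to F(S*, V*) for some local minimizer (S*, V*). -/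
open Matrix Finset Filter Topology

noncomputable section

/-- Squared Frobenius norm of a matrix. -/
def frobSq {m n : ℕ} (M : Matrix (Fin m) (Fin n) ℝ) : ℝ := ∑ i, ∑ j, (M i j) ^ 2

/-- Frobenius norm. -/
def frobNorm {m n : ℕ} (M : Matrix (Fin m) (Fin n) ℝ) : ℝ := Real.sqrt (frobSq M)

/-- Euclidean norm of a vector. -/
def eNorm {n : ℕ} (v : Fin n → ℝ) : ℝ := Real.sqrt (∑ j, (v j) ^ 2)

/-- Sum of the Euclidean norms of the rows, `‖S‖_{2,1}`. -/
def norm21 {p n : ℕ} (B : Matrix (Fin p) (Fin n) ℝ) : ℝ := ∑ i, eNorm (B i)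

/-- `V` has orthonormal columns: `V ∈ 𝕆^{n×k}`. -/
def IsOrthCol {n k : ℕ} (V : Matrix (Fin n) (Fin k) ℝ) : Prop := Vᵀ * V = 1

/-- The objective `F(S, V) = ½‖Y − XSV′‖²_F + λ‖S‖_{2,1}`. -/
def Fobj {m n p k : ℕ} (Y : Matrix (Fin m) (Fin n) ℝ) (X : Matrix (Fin m) (Fin p) ℝ)
    (lam : ℝ) (S : Matrix (Fin p) (Fin k) ℝ) (V : Matrix (Fin n) (Fin k) ℝ) : ℝ :=
  (1 / 2) * frobSq (Y - X * S * Vᵀ) + lam * norm21 S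


/-- `(S, V)` is a local minimum of `F` on `ℝ^{p×k} × 𝕆^{n×k}`. -/
def IsLocMinF {m n p k : ℕ} (Y : Matrix (Fin m) (Fin n) ℝ) (X : Matrix (Fin m) (Fin p) ℝ)
    (lam : ℝ) (S : Matrix (Fin p) (Fin k) ℝ) (V : Matrix (Fin n) (Fin k) ℝ) : Prop :=
  IsOrthCol V ∧ ∃ ε : ℝ, 0 < ε ∧ ∀ (S' : Matrix (Fin p) (Fin k) ℝ)
    (V' : Matrix (Fin n) (Fin k) ℝ), IsOrthCol V' →
      frobNorm (S' - S) + frobNorm (V' - V) < ε → Fobj Y X lam S V ≤ Fobj Y X lam S' V'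

/-- Entrywise inner product of matrices. -/
def ip {m n : ℕ} (A B : Matrix (Fin m) (Fin n) ℝ) : ℝ := ∑ i, ∑ j, A i j * B i j

lemma frobSq_nonneg {m n : ℕ} (A : Matrix (Fin m) (Fin n) ℝ) : 0 ≤ frobSq A := by
  unfold frobSq; positivity

lemma norm21_nonneg {p n : ℕ} (B : Matrix (Fin p) (Fin n) ℝ) : 0 ≤ norm21 B := by
  unfold norm21 eNorm; positivity

lemma frobSq_sub {m n : ℕ} (A B : Matrix (Fin m) (Fin n) ℝ) :
    frobSq (A - B) = frobSq A - 2 * ip A B + frobSq B := by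
  simp only [frobSq, ip, Matrix.sub_apply, sub_sq, Finset.sum_add_distrib,
    Finset.sum_sub_distrib, Finset.mul_sum]
  ring

lemma ip_mul_transpose {m n k : ℕ} (A : Matrix (Fin m) (Fin n) ℝ)
    (M : Matrix (Fin m) (Fin k) ℝ) (V : Matrix (Fin n) (Fin k) ℝ) :
    ip A (M * Vᵀ) = ip (A * V) M := by
  simp only [ip, Matrix.mul_apply, Matrix.transpose_apply, Finset.mul_sum, Finset.sum_mul]
  refine Finset.sum_congr rfl fun i _ => ?_
  rw [Finset.sum_comm]
  refine Finset.sum_congr rfl fun t _ => Finset.sum_congr rfl fun j _ => by ring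

lemma ip_swap {m n k : ℕ} (Y : Matrix (Fin m) (Fin n) ℝ)
    (V : Matrix (Fin n) (Fin k) ℝ) (M : Matrix (Fin m) (Fin k) ℝ) :
    ip (Y * V) M = ip (Yᵀ * M) V := by
  simp only [ip, Matrix.mul_apply, Matrix.transpose_apply, Finset.sum_mul]
  calc ∑ i, ∑ t, ∑ j, Y i j * V j t * M i t
      = ∑ i, ∑ j, ∑ t, Y i j * V j t * M i t :=
        Finset.sum_congr rfl fun i _ => Finset.sum_comm
    _ = ∑ j, ∑ i, ∑ t, Y i j * V j t * M i t := Finset.sum_comm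
    _ = ∑ j, ∑ t, ∑ i, Y i j * V j t * M i t :=
        Finset.sum_congr rfl fun j _ => Finset.sum_comm
    _ = ∑ j, ∑ t, ∑ i, Y i j * M i t * V j t :=
        Finset.sum_congr rfl fun j _ => Finset.sum_congr rfl fun t _ =>
          Finset.sum_congr rfl fun i _ => by ring

lemma frobSq_mul_orth {m n k : ℕ} (M : Matrix (Fin m) (Fin k) ℝ)
    (V : Matrix (Fin n) (Fin k) ℝ) (h : Vᵀ * V = 1) :
    frobSq (M * Vᵀ) = frobSq M := by
  have h1 : frobSq (M * Vᵀ) = ip (M * Vᵀ) (M * Vᵀ) := by simp [frobSq, ip, sq]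
  rw [h1, ip_mul_transpose, Matrix.mul_assoc, h, Matrix.mul_one]
  simp [frobSq, ip, sq]

lemma trace_eq_ip {n k : ℕ} (A V : Matrix (Fin n) (Fin k) ℝ) :
    (Aᵀ * V).trace = ip A V := by
  simp only [Matrix.trace, Matrix.diag, Matrix.mul_apply, Matrix.transpose_apply, ip]
  exact Finset.sum_comm

lemma decompA {m n p k : ℕ} (Y : Matrix (Fin m) (Fin n) ℝ) (X : Matrix (Fin m) (Fin p) ℝ)
    (lam : ℝ) (S : Matrix (Fin p) (Fin k) ℝ) (V : Matrix (Fin n) (Fin k) ℝ)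
    (h : Vᵀ * V = 1) :
    Fobj Y X lam S V = (1 / 2) * frobSq (Y * V - X * S) + lam * norm21 S
      + (1 / 2) * (frobSq Y - frobSq (Y * V)) := by
  have e1 : frobSq (Y - X * S * Vᵀ)
      = frobSq Y - 2 * ip (Y * V) (X * S) + frobSq (X * S) := by
    rw [frobSq_sub, ip_mul_transpose, frobSq_mul_orth _ _ h]
  have e2 : frobSq (Y * V - X * S)
      = frobSq (Y * V) - 2 * ip (Y * V) (X * S) + frobSq (X * S) := frobSq_sub _ _
  unfold Fobj; rw [e1, e2]; ring

lemma decompB {m n p k : ℕ} (Y : Matrix (Fin m) (Fin n) ℝ) (X : Matrix (Fin m) (Fin p) ℝ)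
    (lam : ℝ) (S : Matrix (Fin p) (Fin k) ℝ) (V : Matrix (Fin n) (Fin k) ℝ)
    (h : Vᵀ * V = 1) :
    Fobj Y X lam S V = (1 / 2) * (frobSq Y + frobSq (X * S))
      - ((Yᵀ * X * S)ᵀ * V).trace + lam * norm21 S := by
  have e1 : frobSq (Y - X * S * Vᵀ)
      = frobSq Y - 2 * ip (Y * V) (X * S) + frobSq (X * S) := by
    rw [frobSq_sub, ip_mul_transpose, frobSq_mul_orth _ _ h]
  rw [show Yᵀ * X * S = Yᵀ * (X * S) from Matrix.mul_assoc _ _ _, trace_eq_ip, ← ip_swap]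
  unfold Fobj; rw [e1]; ring

lemma contFobjV {m n p k : ℕ} (Y : Matrix (Fin m) (Fin n) ℝ) (X : Matrix (Fin m) (Fin p) ℝ)
    (lam : ℝ) (S' : Matrix (Fin p) (Fin k) ℝ) :
    Continuous (fun W : Matrix (Fin n) (Fin k) ℝ => Fobj Y X lam S' W) := by
  have hA : Continuous (fun W : Matrix (Fin n) (Fin k) ℝ => Y - X * S' * Wᵀ) :=
    continuous_const.sub (continuous_const.matrix_mul continuous_id.matrix_transpose)
  have h1 : Continuous (fun W : Matrix (Fin n) (Fin k) ℝ => frobSq (Y - X * S' * Wᵀ)) := by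
    unfold frobSq
    exact continuous_finset_sum _ fun i _ => continuous_finset_sum _ fun j _ =>
      (hA.matrix_elem i j).pow 2
  exact (continuous_const.mul h1).add continuous_const

lemma contFobj {m n p k : ℕ} (Y : Matrix (Fin m) (Fin n) ℝ) (X : Matrix (Fin m) (Fin p) ℝ)
    (lam : ℝ) :
    Continuous (fun q : Matrix (Fin p) (Fin k) ℝ × Matrix (Fin n) (Fin k) ℝ =>
      Fobj Y X lam q.1 q.2) := by
  have hA : Continuous (fun q : Matrix (Fin p) (Fin k) ℝ × Matrix (Fin n) (Fin k) ℝ =>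
      Y - X * q.1 * q.2ᵀ) :=
    continuous_const.sub ((continuous_const.matrix_mul continuous_fst).matrix_mul
      continuous_snd.matrix_transpose)
  have h1 : Continuous (fun q : Matrix (Fin p) (Fin k) ℝ × Matrix (Fin n) (Fin k) ℝ =>
      frobSq (Y - X * q.1 * q.2ᵀ)) := by
    unfold frobSq
    exact continuous_finset_sum _ fun i _ => continuous_finset_sum _ fun j _ =>
      (hA.matrix_elem i j).pow 2
  have h2 : Continuous (fun q : Matrix (Fin p) (Fin k) ℝ × Matrix (Fin n) (Fin k) ℝ =>
      norm21 q.1) := by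
    unfold norm21 eNorm
    exact continuous_finset_sum _ fun i _ => Real.continuous_sqrt.comp
      (continuous_finset_sum _ fun j _ => (continuous_fst.matrix_elem i j).pow 2)
  exact (continuous_const.mul h1).add (continuous_const.mul h2)

set_option maxHeartbeats 1000000 in
/-- Theorem 6(ii): convergence of the alternating RCGL algorithm to local minima. -/
theorem stmt6 {m n p k : ℕ} (lam : ℝ) (hlam : 0 < lam) (hk : 1 ≤ k) (hkn : k ≤ n)
    (Y : Matrix (Fin m) (Fin n) ℝ) (X : Matrix (Fin m) (Fin p) ℝ)
    (S : ℕ → Matrix (Fin p) (Fin k) ℝ) (V : ℕ → Matrix (Fin n) (Fin k) ℝ)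
    (hV : ∀ j, IsOrthCol (V j))
    (hSmin : ∀ j, ∀ S' : Matrix (Fin p) (Fin k) ℝ,
      (1 / 2) * frobSq (Y * V j - X * S (j + 1)) + lam * norm21 (S (j + 1)) ≤
        (1 / 2) * frobSq (Y * V j - X * S') + lam * norm21 S')
    (hVmax : ∀ j, ∀ V' : Matrix (Fin n) (Fin k) ℝ, IsOrthCol V' →
      ((Yᵀ * X * S (j + 1))ᵀ * V').trace ≤ ((Yᵀ * X * S (j + 1))ᵀ * V (j + 1)).trace)
    -- every point of `ℝ^{p×k} × 𝕆^{n×k}` outside the local minimum set of `F` satisfies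
    -- `F(S, V) > min_{S̃} F(S̃, V)`
    (hF : ∀ (S₀ : Matrix (Fin p) (Fin k) ℝ) (V₀ : Matrix (Fin n) (Fin k) ℝ), IsOrthCol V₀ →
      ¬ IsLocMinF Y X lam S₀ V₀ →
      ∃ S' : Matrix (Fin p) (Fin k) ℝ, Fobj Y X lam S' V₀ < Fobj Y X lam S₀ V₀) :
    (∀ (Sstar : Matrix (Fin p) (Fin k) ℝ) (Vstar : Matrix (Fin n) (Fin k) ℝ),
      (∃ φ : ℕ → ℕ, StrictMono φ ∧
        Tendsto (fun l => (S (φ l), V (φ l))) atTop (𝓝 (Sstar, Vstar))) →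
      IsLocMinF Y X lam Sstar Vstar) ∧
    Antitone (fun j => Fobj Y X lam (S j) (V j)) ∧
    ∃ (Sstar : Matrix (Fin p) (Fin k) ℝ) (Vstar : Matrix (Fin n) (Fin k) ℝ),
      IsLocMinF Y X lam Sstar Vstar ∧
      Tendsto (fun j => Fobj Y X lam (S j) (V j)) atTop (𝓝 (Fobj Y X lam Sstar Vstar)) := by
  set f : ℕ → ℝ := fun j => Fobj Y X lam (S j) (V j) with hfdef
  -- the two descent steps
  have step1 : ∀ j S', Fobj Y X lam (S (j + 1)) (V j) ≤ Fobj Y X lam S' (V j) := by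
    intro j S'
    rw [decompA _ _ _ _ _ (hV j), decompA _ _ _ _ _ (hV j)]
    have := hSmin j S'
    linarith
  have step2 : ∀ j, f (j + 1) ≤ Fobj Y X lam (S (j + 1)) (V j) := by
    intro j
    show Fobj Y X lam (S (j + 1)) (V (j + 1)) ≤ _
    rw [decompB _ _ _ _ _ (hV (j + 1)), decompB _ _ _ _ _ (hV j)]
    have := hVmax j (V j) (hV j)
    linarith
  have hAnti : Antitone f :=
    antitone_nat_of_succ_le fun j => (step2 j).trans (step1 j (S j))
  have hf0 : ∀ j, 0 ≤ f j := by
    intro j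
    have h1 := frobSq_nonneg (Y - X * S j * (V j)ᵀ)
    have h2 := norm21_nonneg (S j)
    have h3 : 0 ≤ lam * norm21 (S j) := mul_nonneg hlam.le h2
    show 0 ≤ (1 / 2) * frobSq (Y - X * S j * (V j)ᵀ) + lam * norm21 (S j)
    linarith
  have hBdd : BddBelow (Set.range f) := ⟨0, by rintro x ⟨j, rfl⟩; exact hf0 j⟩
  set L : ℝ := ⨅ j, f j with hLdef
  have hTend : Tendsto f atTop (𝓝 L) := tendsto_atTop_ciInf hAnti hBdd
  have hLle : ∀ j, L ≤ f j := fun j => ciInf_le hBdd j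
  have cont := contFobj (k := k) Y X lam
  -- accumulation points are local minima
  have keyAcc : ∀ (Sstar : Matrix (Fin p) (Fin k) ℝ) (Vstar : Matrix (Fin n) (Fin k) ℝ),
      (∃ φ : ℕ → ℕ, StrictMono φ ∧
        Tendsto (fun l => (S (φ l), V (φ l))) atTop (𝓝 (Sstar, Vstar))) →
      IsLocMinF Y X lam Sstar Vstar ∧ Fobj Y X lam Sstar Vstar = L := by
    rintro Sstar Vstar ⟨φ, hφ, hlim⟩
    have hVlim : Tendsto (fun l => V (φ l)) atTop (𝓝 Vstar) :=
      (continuous_snd.tendsto _).comp hlim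
    have horth : IsOrthCol Vstar := by
      have hc : Continuous (fun W : Matrix (Fin n) (Fin k) ℝ => Wᵀ * W) :=
        continuous_id.matrix_transpose.matrix_mul continuous_id
      have h1 : Tendsto (fun l => (V (φ l))ᵀ * V (φ l)) atTop (𝓝 (Vstarᵀ * Vstar)) :=
        (hc.tendsto _).comp hVlim
      have h2 : (fun l => (V (φ l))ᵀ * V (φ l))
          = fun _ => (1 : Matrix (Fin k) (Fin k) ℝ) := funext fun l => hV (φ l)
      rw [h2] at h1
      show Vstarᵀ * Vstar = 1
      exact tendsto_nhds_unique h1 tendsto_const_nhds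
    have hFstar : Tendsto (fun l => f (φ l)) atTop (𝓝 (Fobj Y X lam Sstar Vstar)) := by
      have := (cont.tendsto (Sstar, Vstar)).comp hlim
      simpa [Function.comp_def, hfdef] using this
    have hfL : Tendsto (fun l => f (φ l)) atTop (𝓝 L) := hTend.comp hφ.tendsto_atTop
    have hEq : Fobj Y X lam Sstar Vstar = L := tendsto_nhds_unique hFstar hfL
    refine ⟨?_, hEq⟩
    by_contra hnot
    obtain ⟨S', hS'⟩ := hF Sstar Vstar horth hnot
    have cmap : Continuous (fun W : Matrix (Fin n) (Fin k) ℝ => Fobj Y X lam S' W) :=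
      contFobjV Y X lam S'
    have hcont' : Tendsto (fun l => Fobj Y X lam S' (V (φ l))) atTop
        (𝓝 (Fobj Y X lam S' Vstar)) := (cmap.tendsto _).comp hVlim
    have hlt : Fobj Y X lam S' Vstar < L := hEq ▸ hS'
    have hev : ∀ᶠ l in atTop, Fobj Y X lam S' (V (φ l)) < L :=
      hcont'.eventually (gt_mem_nhds hlt)
    obtain ⟨l, hl⟩ := hev.exists
    have c1 : L ≤ f (φ l + 1) := hLle _
    have c2 : f (φ l + 1) ≤ Fobj Y X lam (S (φ l + 1)) (V (φ l)) := step2 (φ l)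
    have c3 : Fobj Y X lam (S (φ l + 1)) (V (φ l)) ≤ Fobj Y X lam S' (V (φ l)) :=
      step1 (φ l) S'
    linarith
  refine ⟨fun Sstar Vstar h => (keyAcc Sstar Vstar h).1, hAnti, ?_⟩
  -- boundedness and extraction of a convergent subsequence
  set C : ℝ := f 1 / lam with hCdef
  have hSbound : ∀ j i t, S (j + 1) i t ∈ Set.Icc (-C) C := by
    intro j i t
    have hb1 : lam * norm21 (S (j + 1)) ≤ f (j + 1) := by
      have h1 := frobSq_nonneg (Y - X * S (j + 1) * (V (j + 1))ᵀ)
      show _ ≤ (1 / 2) * frobSq (Y - X * S (j + 1) * (V (j + 1))ᵀ) + lam * norm21 (S (j + 1))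
      linarith
    have hb2 : f (j + 1) ≤ f 1 := hAnti (Nat.le_add_left 1 j)
    have hb3 : norm21 (S (j + 1)) ≤ C := by
      rw [hCdef, le_div_iff₀ hlam]
      nlinarith
    have hrow : eNorm (S (j + 1) i) ≤ norm21 (S (j + 1)) := by
      unfold norm21
      exact Finset.single_le_sum (f := fun i' => eNorm (S (j + 1) i'))
        (fun i' _ => Real.sqrt_nonneg _) (Finset.mem_univ i)
    have hentry : |S (j + 1) i t| ≤ eNorm (S (j + 1) i) := by
      unfold eNorm
      rw [← Real.sqrt_sq_eq_abs]
      exact Real.sqrt_le_sqrt (Finset.single_le_sum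
        (f := fun t' => (S (j + 1) i t') ^ 2) (fun t' _ => sq_nonneg _) (Finset.mem_univ t))
    have := abs_le.mp (hentry.trans (hrow.trans hb3))
    exact ⟨this.1, this.2⟩
  have hVbound : ∀ j i t, V j i t ∈ Set.Icc (-1 : ℝ) 1 := by
    intro j i t
    have h1 : ((V j)ᵀ * V j) t t = 1 := by rw [hV j]; simp
    rw [Matrix.mul_apply] at h1
    simp only [Matrix.transpose_apply] at h1
    have h2 : (V j i t) * (V j i t) ≤ 1 := by
      rw [← h1]
      exact Finset.single_le_sum (f := fun i' => V j i' t * V j i' t)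
        (fun i' _ => mul_self_nonneg _) (Finset.mem_univ i)
    constructor <;> nlinarith
  set K : Set (Matrix (Fin p) (Fin k) ℝ × Matrix (Fin n) (Fin k) ℝ) :=
    (Set.univ.pi fun _ : Fin p => Set.univ.pi fun _ : Fin k => Set.Icc (-C) C) ×ˢ
      (Set.univ.pi fun _ : Fin n => Set.univ.pi fun _ : Fin k => Set.Icc (-1 : ℝ) 1)
    with hKdef
  have hK : IsCompact K :=
    IsCompact.prod
      (isCompact_univ_pi fun _ => isCompact_univ_pi fun _ => isCompact_Icc)
      (isCompact_univ_pi fun _ => isCompact_univ_pi fun _ => isCompact_Icc)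
  have hmem : ∀ l, (S (l + 1), V (l + 1)) ∈ K := by
    intro l
    refine ⟨fun i _ => fun t _ => hSbound l i t, fun i _ => fun t _ => hVbound (l + 1) i t⟩
  haveI : FirstCountableTopology (Matrix (Fin p) (Fin k) ℝ) :=
    inferInstanceAs (FirstCountableTopology (Fin p → Fin k → ℝ))
  haveI : FirstCountableTopology (Matrix (Fin n) (Fin k) ℝ) :=
    inferInstanceAs (FirstCountableTopology (Fin n → Fin k → ℝ))
  obtain ⟨q, -, φ, hφ, hlim⟩ :=
    hK.tendsto_subseq (x := fun l => (S (l + 1), V (l + 1))) hmem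
  have hψ : StrictMono fun l => φ l + 1 := fun a b h => Nat.succ_lt_succ (hφ h)
  have hlim' : Tendsto (fun l => (S (φ l + 1), V (φ l + 1))) atTop (𝓝 (q.1, q.2)) := by
    simpa [Function.comp_def] using hlim
  obtain ⟨hloc, hEq⟩ := keyAcc q.1 q.2 ⟨fun l => φ l + 1, hψ, hlim'⟩
  exact ⟨q.1, q.2, hloc, hEq ▸ hTend⟩

end
end

section
/- Fix λ > 0, n ≥ k ≥ 1, an m×n matrix Y, an m×p matrix X with spectral norm ‖X‖₂ ≤ 1, and an integer M ≥ 1. Define T_V(S) = Θ⃗(X′YV + (I − X′X)S; λ), where Θ⃗ applies row-wise the vector soft-thresholding a ↦ a(1 − λ/‖a‖₂)₊ (with 0 ↦ 0). Let (S⁽ʲ⁾, V⁽ʲ⁾) be a sequence in ℝ^{p×k} × 𝕆^{n×k} such that for every j, S⁽ʲ⁺¹⁾ = T_{V⁽ʲ⁾}^{α_j}(S⁽ʲ⁾) for some integer 1 ≤ α_j ≤ M, and V⁽ʲ⁺¹⁾ globally maximizes V ↦ tr((Y′XS⁽ʲ⁺¹⁾)′V) over 𝕆^{n×k}. Then any accumulation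 point (S*, V*) of the sequence is a coordinatewise minimum point of F, i.e., F(S, V*) ≥ F(S*, V*) for all S ∈ ℝ^{p×k} and F(S*, V) ≥ F(S*, V*) for all V ∈ 𝕆^{n×k}, and F(S⁽ʲ⁾, V⁽ʲ⁾) converges monotonically (nonincreasing) to F(S*, V*) for some coordinatewise minimum point (S*, V*). -/
open Matrix Finset Filter Topology

noncomputable section

/-- Row-wise vector soft-thresholding: `Θ⃗(a; λ) = a(1 − λ/‖a‖₂)` if `‖a‖₂ > λ`, else `0`. -/
def vecTheta {k : ℕ} (lam : ℝ) (a : Fin k → ℝ) : Fin k → ℝ :=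
  if lam < eNorm a then (1 - lam / eNorm a) • a else 0

/-- The thresholding map `T_V(S) = Θ⃗(X′YV + (I − X′X)S; λ)`, applied row-wise. -/
def Tmap {m n p k : ℕ} (Y : Matrix (Fin m) (Fin n) ℝ) (X : Matrix (Fin m) (Fin p) ℝ)
    (lam : ℝ) (V : Matrix (Fin n) (Fin k) ℝ) (S : Matrix (Fin p) (Fin k) ℝ) :
    Matrix (Fin p) (Fin k) ℝ :=
  Matrix.of fun i => vecTheta lam ((Xᵀ * Y * V + (1 - Xᵀ * X) * S :
    Matrix (Fin p) (Fin k) ℝ) i)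

/-- `(S*, V*)` is a coordinatewise minimum point of `F` on `ℝ^{p×k} × 𝕆^{n×k}`. -/
def IsCWMin {m n p k : ℕ} (Y : Matrix (Fin m) (Fin n) ℝ) (X : Matrix (Fin m) (Fin p) ℝ)
    (lam : ℝ) (Sstar : Matrix (Fin p) (Fin k) ℝ) (Vstar : Matrix (Fin n) (Fin k) ℝ) : Prop :=
  IsOrthCol Vstar ∧
    (∀ S : Matrix (Fin p) (Fin k) ℝ, Fobj Y X lam Sstar Vstar ≤ Fobj Y X lam S Vstar) ∧
    (∀ V : Matrix (Fin n) (Fin k) ℝ, IsOrthCol V →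
      Fobj Y X lam Sstar Vstar ≤ Fobj Y X lam Sstar V)

namespace H
def ip {a b : ℕ} (A B : Matrix (Fin a) (Fin b) ℝ) : ℝ := ∑ i, ∑ j, A i j * B i j
def ipv {k : ℕ} (u v : Fin k → ℝ) : ℝ := ∑ j, u j * v j

lemma frobSq_nonneg {a b : ℕ} (A : Matrix (Fin a) (Fin b) ℝ) : 0 ≤ frobSq A :=
  Finset.sum_nonneg fun _ _ => Finset.sum_nonneg fun _ _ => sq_nonneg _
lemma eNorm_nonneg {k : ℕ} (v : Fin k → ℝ) : 0 ≤ eNorm v := Real.sqrt_nonneg _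
lemma eNorm_sq {k : ℕ} (v : Fin k → ℝ) : eNorm v ^ 2 = ∑ j, (v j)^2 :=
  Real.sq_sqrt (Finset.sum_nonneg fun _ _ => sq_nonneg _)
lemma norm21_nonneg {a b : ℕ} (A : Matrix (Fin a) (Fin b) ℝ) : 0 ≤ norm21 A :=
  Finset.sum_nonneg fun _ _ => eNorm_nonneg _

lemma sub_expand {a b : ℕ} (A B : Matrix (Fin a) (Fin b) ℝ) :
    frobSq (A - B) = frobSq A - 2 * ip A B + frobSq B := by
  simp only [frobSq, ip, Matrix.sub_apply, Finset.mul_sum, ← Finset.sum_add_distrib,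
    ← Finset.sum_sub_distrib]
  exact Finset.sum_congr rfl fun i _ => Finset.sum_congr rfl fun j _ => by ring
lemma ip_comm {a b : ℕ} (A B : Matrix (Fin a) (Fin b) ℝ) : ip A B = ip B A := by
  simp only [ip]; exact Finset.sum_congr rfl fun i _ => Finset.sum_congr rfl fun j _ => mul_comm _ _
lemma ip_sub_left {a b : ℕ} (A B C : Matrix (Fin a) (Fin b) ℝ) :
    ip (A - B) C = ip A C - ip B C := by
  simp only [ip, Matrix.sub_apply, ← Finset.sum_sub_distrib]
  exact Finset.sum_congr rfl fun i _ => Finset.sum_congr rfl fun j _ => by ring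
lemma ip_sub_right {a b : ℕ} (A B C : Matrix (Fin a) (Fin b) ℝ) :
    ip A (B - C) = ip A B - ip A C := by
  simp only [ip, Matrix.sub_apply, ← Finset.sum_sub_distrib]
  exact Finset.sum_congr rfl fun i _ => Finset.sum_congr rfl fun j _ => by ring
lemma adjL {m p k : ℕ} (X : Matrix (Fin m) (Fin p) ℝ) (B : Matrix (Fin p) (Fin k) ℝ)
    (C : Matrix (Fin m) (Fin k) ℝ) : ip (X * B) C = ip B (Xᵀ * C) := by
  simp only [ip, Matrix.mul_apply, Matrix.transpose_apply, Finset.sum_mul, Finset.mul_sum]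
  conv_lhs => rw [Finset.sum_comm]
  conv_rhs => rw [Finset.sum_comm]
  refine Finset.sum_congr rfl fun l _ => ?_
  rw [Finset.sum_comm]
  exact Finset.sum_congr rfl fun r _ => Finset.sum_congr rfl fun i _ => by ring
lemma adjR {p n k : ℕ} (B : Matrix (Fin p) (Fin k) ℝ) (V : Matrix (Fin n) (Fin k) ℝ)
    (C : Matrix (Fin p) (Fin n) ℝ) : ip (B * Vᵀ) C = ip B (C * V) := by
  simp only [ip, Matrix.mul_apply, Matrix.transpose_apply, Finset.sum_mul, Finset.mul_sum]
  refine Finset.sum_congr rfl fun r _ => ?_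
  rw [Finset.sum_comm]
  exact Finset.sum_congr rfl fun l _ => Finset.sum_congr rfl fun j _ => by ring
lemma frobSq_eq_ip {a b : ℕ} (A : Matrix (Fin a) (Fin b) ℝ) : frobSq A = ip A A := by
  simp only [frobSq, ip, sq]
lemma trace_eq_ip {a b : ℕ} (A V : Matrix (Fin a) (Fin b) ℝ) :
    (Aᵀ * V).trace = ip A V := by
  simp only [Matrix.trace, Matrix.diag, Matrix.mul_apply, Matrix.transpose_apply, ip]
  rw [Finset.sum_comm]

lemma frobSq_mul_orth {p n k : ℕ} (B : Matrix (Fin p) (Fin k) ℝ)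
    {V : Matrix (Fin n) (Fin k) ℝ} (hV : IsOrthCol V) :
    frobSq (B * Vᵀ) = frobSq B := by
  rw [frobSq_eq_ip, adjR, Matrix.mul_assoc, hV, Matrix.mul_one, ← frobSq_eq_ip]

lemma ipswap {m n p k : ℕ} (Y : Matrix (Fin m) (Fin n) ℝ) (X : Matrix (Fin m) (Fin p) ℝ)
    (S : Matrix (Fin p) (Fin k) ℝ) (V : Matrix (Fin n) (Fin k) ℝ) :
    ip (Xᵀ * Y * V) S = ip (Yᵀ * X * S) V := by
  rw [ip_comm, Matrix.mul_assoc, ← adjL X S (Y * V), ip_comm (X * S) (Y * V),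
    adjL Y V (X * S), ip_comm, Matrix.mul_assoc]

/-- expansion of the objective for orthonormal V -/
lemma Fexpand {m n p k : ℕ} (Y : Matrix (Fin m) (Fin n) ℝ) (X : Matrix (Fin m) (Fin p) ℝ)
    (lam : ℝ) (S : Matrix (Fin p) (Fin k) ℝ) {V : Matrix (Fin n) (Fin k) ℝ}
    (hV : IsOrthCol V) :
    Fobj Y X lam S V = (1/2) * frobSq Y - ip (Xᵀ * Y * V) S + (1/2) * frobSq (X * S)
      + lam * norm21 S := by
  have h1 : ip Y (X * S * Vᵀ) = ip (Xᵀ * Y * V) S := by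
    rw [ip_comm, adjR, adjL, ip_comm, Matrix.mul_assoc]
  rw [Fobj, sub_expand, frobSq_mul_orth _ hV, h1]
  ring
lemma cauchy {k : ℕ} (u v : Fin k → ℝ) : ipv u v ≤ eNorm u * eNorm v := by
  have h := Finset.sum_mul_sq_le_sq_mul_sq Finset.univ u v
  have h2 : ipv u v ≤ |ipv u v| := le_abs_self _
  have h3 : |ipv u v| = Real.sqrt ((ipv u v)^2) := (Real.sqrt_sq_eq_abs _).symm
  calc ipv u v ≤ Real.sqrt ((ipv u v)^2) := h3 ▸ h2
    _ ≤ Real.sqrt ((∑ j, u j ^ 2) * (∑ j, v j ^ 2)) := Real.sqrt_le_sqrt h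
    _ = eNorm u * eNorm v := by
        rw [eNorm, eNorm, ← Real.sqrt_mul (Finset.sum_nonneg fun _ _ => sq_nonneg _)]

lemma eNorm_smul {k : ℕ} {c : ℝ} (hc : 0 ≤ c) (v : Fin k → ℝ) :
    eNorm (c • v) = c * eNorm v := by
  simp only [eNorm, Pi.smul_apply, smul_eq_mul, mul_pow, ← Finset.mul_sum]
  rw [Real.sqrt_mul (by positivity), Real.sqrt_sq hc]

/-- key subgradient-type inequality for the soft-thresholding -/
lemma rowKey {k : ℕ} {lam : ℝ} (hlam : 0 < lam) (a s : Fin k → ℝ) :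
    ipv (s - vecTheta lam a) (a - vecTheta lam a)
      ≤ lam * (eNorm s - eNorm (vecTheta lam a)) := by
  have hsub : ∀ u w v : Fin k → ℝ, ipv (u - w) v = ipv u v - ipv w v := by
    intro u w v
    simp only [ipv, Pi.sub_apply, ← Finset.sum_sub_distrib]
    exact Finset.sum_congr rfl fun j _ => by ring
  by_cases h : lam < eNorm a
  · set r := eNorm a with hr
    have hrpos : 0 < r := hlam.trans h
    have hc : (0:ℝ) ≤ 1 - lam / r := by
      rw [sub_nonneg, div_le_one hrpos]; exact h.le
    have ht : vecTheta lam a = (1 - lam / r) • a := by rw [vecTheta, if_pos h]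
    have hat : a - vecTheta lam a = (lam / r) • a := by
      rw [ht]; funext j; simp [Pi.smul_apply]; ring
    have hnt : eNorm (vecTheta lam a) = r - lam := by
      rw [ht, eNorm_smul hc, ← hr]; field_simp
    have hipa : ipv a a = r^2 := by
      rw [hr, eNorm_sq]; simp [ipv, sq]
    have h1 : ipv (vecTheta lam a) ((lam / r) • a) = lam * (r - lam) := by
      rw [ht]
      simp only [ipv, Pi.smul_apply, smul_eq_mul]
      have : ∑ j, (1 - lam / r) * a j * (lam / r * a j)
          = ((1 - lam / r) * (lam / r)) * ∑ j, a j * a j := by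
        rw [Finset.mul_sum]; exact Finset.sum_congr rfl fun j _ => by ring
      rw [this]
      have : (∑ j, a j * a j) = r ^ 2 := hipa
      rw [this]; field_simp
    have h2 : ipv s ((lam / r) • a) ≤ lam * eNorm s := by
      have : ipv s ((lam / r) • a) = (lam / r) * ipv s a := by
        simp only [ipv, Pi.smul_apply, smul_eq_mul, Finset.mul_sum]
        exact Finset.sum_congr rfl fun j _ => by ring
      rw [this]
      have hcs : ipv s a ≤ eNorm s * r := cauchy s a
      have := mul_le_mul_of_nonneg_left hcs (le_of_lt (div_pos hlam hrpos))
      calc (lam / r) * ipv s a ≤ (lam / r) * (eNorm s * r) := this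
        _ = lam * eNorm s := by field_simp
    rw [hsub, hat, hnt]
    linarith [h1, h2]
  · have ht : vecTheta lam a = 0 := by rw [vecTheta, if_neg h]
    rw [ht]
    simp only [sub_zero, eNorm]
    have h0 : eNorm (0 : Fin k → ℝ) = 0 := by simp [eNorm]
    have hcs : ipv s a ≤ eNorm s * eNorm a := cauchy s a
    have hea : eNorm a ≤ lam := not_lt.1 h
    have := mul_le_mul_of_nonneg_left hea (eNorm_nonneg s)
    calc ipv s a ≤ eNorm s * eNorm a := hcs
      _ ≤ eNorm s * lam := this
      _ ≤ lam * (Real.sqrt (∑ j, s j ^ 2) - Real.sqrt (∑ j, (0:Fin k → ℝ) j ^2)) := by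
          simp [eNorm] at h0 ⊢; rw [mul_comm]

lemma add_expand {a b : ℕ} (A B : Matrix (Fin a) (Fin b) ℝ) :
    frobSq (A + B) = frobSq A + 2 * ip A B + frobSq B := by
  simp only [frobSq, ip, Matrix.add_apply, Finset.mul_sum, ← Finset.sum_add_distrib]
  exact Finset.sum_congr rfl fun i _ => Finset.sum_congr rfl fun j _ => by ring

lemma frobSq_flip {a b : ℕ} (A B : Matrix (Fin a) (Fin b) ℝ) :
    frobSq (A - B) = frobSq (B - A) := by
  simp only [frobSq, Matrix.sub_apply]
  exact Finset.sum_congr rfl fun i _ => Finset.sum_congr rfl fun j _ => by ring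

lemma frobSq_eq_zero {a b : ℕ} {A : Matrix (Fin a) (Fin b) ℝ} (h : frobSq A = 0) :
    A = 0 := by
  funext i j
  have h1 : ∀ i ∈ Finset.univ (α := Fin a), (0:ℝ) ≤ ∑ j, (A i j)^2 :=
    fun _ _ => Finset.sum_nonneg fun _ _ => sq_nonneg _
  have h2 := (Finset.sum_eq_zero_iff_of_nonneg h1).1 h i (Finset.mem_univ i)
  have h3 := (Finset.sum_eq_zero_iff_of_nonneg (fun _ _ => sq_nonneg _)).1 h2 j (Finset.mem_univ j)
  simpa using pow_eq_zero_iff (n := 2) (by norm_num) |>.1 h3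

lemma Tmap_apply {m n p k : ℕ} (Y : Matrix (Fin m) (Fin n) ℝ) (X : Matrix (Fin m) (Fin p) ℝ)
    (lam : ℝ) (V : Matrix (Fin n) (Fin k) ℝ) (S : Matrix (Fin p) (Fin k) ℝ) (i : Fin p) :
    Tmap Y X lam V S i = vecTheta lam ((Xᵀ * Y * V + (1 - Xᵀ * X) * S :
      Matrix (Fin p) (Fin k) ℝ) i) := rfl

/-- M0: summed subgradient inequality -/
lemma M0 {m n p k : ℕ} (Y : Matrix (Fin m) (Fin n) ℝ) (X : Matrix (Fin m) (Fin p) ℝ)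
    {lam : ℝ} (hlam : 0 < lam) (V : Matrix (Fin n) (Fin k) ℝ) (S S' : Matrix (Fin p) (Fin k) ℝ) :
    ip (S' - Tmap Y X lam V S) ((Xᵀ * Y * V + (1 - Xᵀ * X) * S) - Tmap Y X lam V S)
      ≤ lam * (norm21 S' - norm21 (Tmap Y X lam V S)) := by
  set A := Xᵀ * Y * V + (1 - Xᵀ * X) * S with hA
  set T := Tmap Y X lam V S with hT
  have h1 : ip (S' - T) (A - T) = ∑ i, ipv (S' i - T i) (A i - T i) := by
    simp only [ip, ipv, Matrix.sub_apply, Pi.sub_apply]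
  have h2 : lam * (norm21 S' - norm21 T) = ∑ i, lam * (eNorm (S' i) - eNorm (T i)) := by
    simp only [norm21, Finset.mul_sum, ← Finset.sum_sub_distrib, mul_sub]
  rw [h1, h2]
  refine Finset.sum_le_sum fun i _ => ?_
  have : T i = vecTheta lam (A i) := rfl
  rw [this]
  exact rowKey hlam (A i) (S' i)

/-- M1: strong prox inequality, matrix form -/
lemma M1 {m n p k : ℕ} (Y : Matrix (Fin m) (Fin n) ℝ) (X : Matrix (Fin m) (Fin p) ℝ)
    {lam : ℝ} (hlam : 0 < lam) (V : Matrix (Fin n) (Fin k) ℝ) (S S' : Matrix (Fin p) (Fin k) ℝ) :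
    (1/2) * frobSq (Tmap Y X lam V S - (Xᵀ * Y * V + (1 - Xᵀ * X) * S))
      + lam * norm21 (Tmap Y X lam V S)
      + (1/2) * frobSq (S' - Tmap Y X lam V S)
    ≤ (1/2) * frobSq (S' - (Xᵀ * Y * V + (1 - Xᵀ * X) * S)) + lam * norm21 S' := by
  set A := Xᵀ * Y * V + (1 - Xᵀ * X) * S with hA
  set T := Tmap Y X lam V S with hT
  have key := M0 Y X hlam V S S'
  have hd : S' - A = (S' - T) + (T - A) := (sub_add_sub_cancel S' T A).symm
  have he : frobSq (S' - A) = frobSq (S' - T) + 2 * ip (S' - T) (T - A) + frobSq (T - A) := by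
    rw [hd, add_expand]
  have hip : ip (S' - T) (T - A) = - ip (S' - T) (A - T) := by
    rw [ip_sub_right, ip_sub_right]; ring
  rw [← hA, ← hT] at key
  linarith [he, hip, key]

lemma colSq {m p k : ℕ} (X : Matrix (Fin m) (Fin p) ℝ)
    (hX : ∀ v : Fin p → ℝ, ∑ i, (X.mulVec v i) ^ 2 ≤ ∑ i, (v i) ^ 2)
    (D : Matrix (Fin p) (Fin k) ℝ) : frobSq (X * D) ≤ frobSq D := by
  have h1 : frobSq (X * D) = ∑ l, ∑ i, ((X * D) i l)^2 := by
    rw [frobSq]; rw [Finset.sum_comm]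
  have h2 : frobSq D = ∑ l, ∑ i, (D i l)^2 := by
    rw [frobSq]; rw [Finset.sum_comm]
  rw [h1, h2]
  refine Finset.sum_le_sum fun l _ => ?_
  have hcol : ∀ i, (X * D) i l = X.mulVec (fun r => D r l) i := fun i => by
    simp [Matrix.mul_apply, Matrix.mulVec, dotProduct]
  simp_rw [hcol]
  exact hX _

lemma quadExpand {m p k : ℕ} (X : Matrix (Fin m) (Fin p) ℝ)
    (S T : Matrix (Fin p) (Fin k) ℝ) :
    frobSq (X * T) = frobSq (X * S) + 2 * ip (Xᵀ * X * S) (T - S) + frobSq (X * (T - S)) := by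
  have h0 : X * T = X * S + X * (T - S) := by rw [Matrix.mul_sub]; abel
  rw [h0, add_expand]
  have : ip (X * S) (X * (T - S)) = ip (Xᵀ * X * S) (T - S) := by
    rw [ip_comm, adjL, ← Matrix.mul_assoc, ip_comm]
  rw [this]

lemma Fstep {m n p k : ℕ} (Y : Matrix (Fin m) (Fin n) ℝ) (X : Matrix (Fin m) (Fin p) ℝ)
    {lam : ℝ} (hlam : 0 < lam)
    (hX : ∀ v : Fin p → ℝ, ∑ i, (X.mulVec v i) ^ 2 ≤ ∑ i, (v i) ^ 2)
    {V : Matrix (Fin n) (Fin k) ℝ} (hV : IsOrthCol V) (S : Matrix (Fin p) (Fin k) ℝ) :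
    Fobj Y X lam (Tmap Y X lam V S) V + (1/2) * frobSq (Tmap Y X lam V S - S)
      ≤ Fobj Y X lam S V := by
  set A := Xᵀ * Y * V + (1 - Xᵀ * X) * S with hA
  set T := Tmap Y X lam V S with hT
  have hAe : A = Xᵀ * Y * V + S - Xᵀ * X * S := by
    rw [hA, Matrix.sub_mul, Matrix.one_mul]; abel
  have hSA : S - A = Xᵀ * X * S - Xᵀ * Y * V := by rw [hAe]; abel
  have e5 := M1 Y X hlam V S S
  rw [← hA, ← hT] at e5
  have e6 : frobSq (T - A) = frobSq (S - A) + 2 * ip (S - A) (T - S) + frobSq (T - S) := by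
    have hd : T - A = (S - A) + (T - S) := by abel
    rw [hd, add_expand]
  have e2 := quadExpand X S T
  have e3 : frobSq (X * (T - S)) ≤ frobSq (T - S) := colSq X hX _
  have eS := Fexpand Y X lam S hV
  have eT := Fexpand Y X lam T hV
  have e4 : ip (S - A) (T - S) = ip (Xᵀ * X * S) (T - S) - ip (Xᵀ * Y * V) (T - S) := by
    rw [hSA, ip_sub_left]
  have e7 : ip (Xᵀ * Y * V) T = ip (Xᵀ * Y * V) S + ip (Xᵀ * Y * V) (T - S) := by
    rw [ip_sub_right]; ring
  have e8 : frobSq (S - T) = frobSq (T - S) := frobSq_flip _ _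
  linarith [e5, e6, e2, e3, eS, eT, e4, e7, e8]

lemma Ffix {m n p k : ℕ} (Y : Matrix (Fin m) (Fin n) ℝ) (X : Matrix (Fin m) (Fin p) ℝ)
    {lam : ℝ} (hlam : 0 < lam)
    {V : Matrix (Fin n) (Fin k) ℝ} (hV : IsOrthCol V) {S : Matrix (Fin p) (Fin k) ℝ}
    (hfix : Tmap Y X lam V S = S) (S' : Matrix (Fin p) (Fin k) ℝ) :
    Fobj Y X lam S V ≤ Fobj Y X lam S' V := by
  set A := Xᵀ * Y * V + (1 - Xᵀ * X) * S with hA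
  have hAe : A = Xᵀ * Y * V + S - Xᵀ * X * S := by
    rw [hA, Matrix.sub_mul, Matrix.one_mul]; abel
  have hAS : A - S = Xᵀ * Y * V - Xᵀ * X * S := by rw [hAe]; abel
  have key := M0 Y X hlam V S S'
  rw [← hA, hfix] at key
  have conv := quadExpand X S S'
  have hnn := frobSq_nonneg (X * (S' - S))
  have hip : ip (S' - S) (A - S) = ip (S' - S) (Xᵀ * Y * V) - ip (S' - S) (Xᵀ * X * S) := by
    rw [hAS, ip_sub_right]
  have hc1 : ip (S' - S) (Xᵀ * Y * V) = ip (Xᵀ * Y * V) (S' - S) := ip_comm _ _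
  have hc2 : ip (S' - S) (Xᵀ * X * S) = ip (Xᵀ * X * S) (S' - S) := ip_comm _ _
  have e7 : ip (Xᵀ * Y * V) S' = ip (Xᵀ * Y * V) S + ip (Xᵀ * Y * V) (S' - S) := by
    rw [ip_sub_right]; ring
  have eS := Fexpand Y X lam S hV
  have eS' := Fexpand Y X lam S' hV
  linarith [key, conv, hnn, hip, hc1, hc2, e7, eS, eS']

lemma eNorm_cont {k : ℕ} : Continuous (eNorm : (Fin k → ℝ) → ℝ) := by
  unfold eNorm
  exact Real.continuous_sqrt.comp
    (continuous_finset_sum _ fun j _ => (continuous_apply j).pow 2)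

lemma vecTheta_eq {k : ℕ} {lam : ℝ} (hlam : 0 < lam) (a : Fin k → ℝ) :
    vecTheta lam a = (1 - lam / max lam (eNorm a)) • a := by
  by_cases h : lam < eNorm a
  · rw [vecTheta, if_pos h, max_eq_right h.le]
  · rw [vecTheta, if_neg h, max_eq_left (not_lt.1 h), div_self hlam.ne']
    simp

lemma vecTheta_cont {k : ℕ} {lam : ℝ} (hlam : 0 < lam) :
    Continuous (vecTheta lam : (Fin k → ℝ) → (Fin k → ℝ)) := by
  have he : (vecTheta lam : (Fin k → ℝ) → (Fin k → ℝ))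
      = fun a => (1 - lam / max lam (eNorm a)) • a := funext (vecTheta_eq hlam)
  rw [he]
  refine Continuous.smul (f := fun a : Fin k → ℝ => 1 - lam / max lam (eNorm a)) ?_ continuous_id
  refine continuous_const.sub (Continuous.div continuous_const
    (continuous_const.max eNorm_cont) fun a => ?_)
  exact (lt_of_lt_of_le hlam (le_max_left _ _)).ne'

lemma frobSq_cont {a b : ℕ} : Continuous (frobSq : Matrix (Fin a) (Fin b) ℝ → ℝ) := by
  unfold frobSq
  exact continuous_finset_sum _ fun i _ => continuous_finset_sum _ fun j _ =>
    (continuous_id.matrix_elem i j).pow 2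

lemma norm21_cont {a b : ℕ} : Continuous (norm21 : Matrix (Fin a) (Fin b) ℝ → ℝ) := by
  unfold norm21
  exact continuous_finset_sum _ fun i _ => eNorm_cont.comp (continuous_apply i)

lemma Fobj_cont {m n p k : ℕ} (Y : Matrix (Fin m) (Fin n) ℝ) (X : Matrix (Fin m) (Fin p) ℝ)
    (lam : ℝ) : Continuous (fun q : Matrix (Fin p) (Fin k) ℝ × Matrix (Fin n) (Fin k) ℝ =>
      Fobj Y X lam q.1 q.2) := by
  unfold Fobj
  refine Continuous.add (continuous_const.mul (frobSq_cont.comp ?_))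
    (continuous_const.mul (norm21_cont.comp continuous_fst))
  exact continuous_const.sub
    (((continuous_const.matrix_mul continuous_fst)).matrix_mul continuous_snd.matrix_transpose)

lemma Tmap_cont {m n p k : ℕ} (Y : Matrix (Fin m) (Fin n) ℝ) (X : Matrix (Fin m) (Fin p) ℝ)
    {lam : ℝ} (hlam : 0 < lam) :
    Continuous (fun q : Matrix (Fin p) (Fin k) ℝ × Matrix (Fin n) (Fin k) ℝ =>
      Tmap Y X lam q.2 q.1) := by
  have hA : Continuous (fun q : Matrix (Fin p) (Fin k) ℝ × Matrix (Fin n) (Fin k) ℝ =>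
      (Xᵀ * Y * q.2 + (1 - Xᵀ * X) * q.1 : Matrix (Fin p) (Fin k) ℝ)) :=
    (continuous_const.matrix_mul continuous_snd).add (continuous_const.matrix_mul continuous_fst)
  show Continuous fun q : Matrix (Fin p) (Fin k) ℝ × Matrix (Fin n) (Fin k) ℝ =>
    (fun i => vecTheta lam ((Xᵀ * Y * q.2 + (1 - Xᵀ * X) * q.1 :
      Matrix (Fin p) (Fin k) ℝ) i) : Matrix (Fin p) (Fin k) ℝ)
  exact continuous_pi fun i => (vecTheta_cont hlam).comp ((continuous_apply i).comp hA)

lemma ip_cont₁ {a b : ℕ} (C : Matrix (Fin a) (Fin b) ℝ) :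
    Continuous (fun A : Matrix (Fin a) (Fin b) ℝ => ip A C) := by
  unfold ip
  exact continuous_finset_sum _ fun i _ => continuous_finset_sum _ fun j _ =>
    (continuous_id.matrix_elem i j).mul continuous_const

lemma ipYXS_cont {m n p k : ℕ} (Y : Matrix (Fin m) (Fin n) ℝ) (X : Matrix (Fin m) (Fin p) ℝ) :
    Continuous (fun q : Matrix (Fin p) (Fin k) ℝ × Matrix (Fin n) (Fin k) ℝ =>
      ip (Yᵀ * X * q.1) q.2) := by
  unfold ip
  refine continuous_finset_sum _ fun i _ => continuous_finset_sum _ fun j _ => Continuous.mul ?_ ?_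
  · exact (continuous_const.matrix_mul continuous_fst).matrix_elem i j
  · exact continuous_snd.matrix_elem i j

lemma Fobj_nonneg {m n p k : ℕ} (Y : Matrix (Fin m) (Fin n) ℝ) (X : Matrix (Fin m) (Fin p) ℝ)
    {lam : ℝ} (hlam : 0 < lam) (S : Matrix (Fin p) (Fin k) ℝ) (V : Matrix (Fin n) (Fin k) ℝ) :
    0 ≤ Fobj Y X lam S V := by
  have h1 := frobSq_nonneg (Y - X * S * Vᵀ)
  have h2 := norm21_nonneg S
  have := mul_nonneg hlam.le h2
  rw [Fobj]; positivity

lemma lam_norm21_le {m n p k : ℕ} (Y : Matrix (Fin m) (Fin n) ℝ) (X : Matrix (Fin m) (Fin p) ℝ)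
    (lam : ℝ) (S : Matrix (Fin p) (Fin k) ℝ) (V : Matrix (Fin n) (Fin k) ℝ) :
    lam * norm21 S ≤ Fobj Y X lam S V := by
  have h1 := frobSq_nonneg (Y - X * S * Vᵀ)
  rw [Fobj]; linarith

lemma abs_le_eNorm {k : ℕ} (v : Fin k → ℝ) (j : Fin k) : |v j| ≤ eNorm v := by
  rw [← Real.sqrt_sq_eq_abs, eNorm]
  exact Real.sqrt_le_sqrt (Finset.single_le_sum (f := fun j => (v j)^2)
    (fun _ _ => sq_nonneg _) (Finset.mem_univ j))

lemma eNorm_le_norm21 {a b : ℕ} (B : Matrix (Fin a) (Fin b) ℝ) (i : Fin a) :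
    eNorm (B i) ≤ norm21 B :=
  Finset.single_le_sum (f := fun i => eNorm (B i)) (fun _ _ => eNorm_nonneg _) (Finset.mem_univ i)

lemma orth_entry_le {n k : ℕ} {V : Matrix (Fin n) (Fin k) ℝ} (hV : IsOrthCol V)
    (i : Fin n) (l : Fin k) : |V i l| ≤ 1 := by
  have h1 : ∑ r, (V r l)^2 = 1 := by
    have := congrFun (congrFun hV l) l
    simp only [Matrix.mul_apply, Matrix.transpose_apply, Matrix.one_apply_eq] at this
    rw [← this]
    exact Finset.sum_congr rfl fun r _ => (sq (V r l)).symm ▸ rfl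
  have h2 : (V i l)^2 ≤ 1 := h1 ▸ Finset.single_le_sum (f := fun r => (V r l)^2)
    (fun _ _ => sq_nonneg _) (Finset.mem_univ i)
  exact (sq_le_one_iff_abs_le_one _).1 h2

end H

set_option maxHeartbeats 1000000 in
/-- Theorem 7: global convergence of the inexact algorithm 𝒜′ to coordinatewise minima. -/
theorem stmt7 {m n p k : ℕ} (lam : ℝ) (hlam : 0 < lam) (hk : 1 ≤ k) (hkn : k ≤ n)
    (Y : Matrix (Fin m) (Fin n) ℝ) (X : Matrix (Fin m) (Fin p) ℝ)
    -- spectral norm `‖X‖₂ ≤ 1`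
    (hX : ∀ v : Fin p → ℝ, ∑ i, (X.mulVec v i) ^ 2 ≤ ∑ i, (v i) ^ 2)
    (M : ℕ) (hM : 1 ≤ M)
    (S : ℕ → Matrix (Fin p) (Fin k) ℝ) (V : ℕ → Matrix (Fin n) (Fin k) ℝ)
    (hV : ∀ j, IsOrthCol (V j))
    (α : ℕ → ℕ) (hα : ∀ j, 1 ≤ α j ∧ α j ≤ M)
    (hSstep : ∀ j, S (j + 1) = (Tmap Y X lam (V j))^[α j] (S j))
    (hVmax : ∀ j, ∀ V' : Matrix (Fin n) (Fin k) ℝ, IsOrthCol V' →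
      ((Yᵀ * X * S (j + 1))ᵀ * V').trace ≤ ((Yᵀ * X * S (j + 1))ᵀ * V (j + 1)).trace) :
    (∀ (Sstar : Matrix (Fin p) (Fin k) ℝ) (Vstar : Matrix (Fin n) (Fin k) ℝ),
      (∃ φ : ℕ → ℕ, StrictMono φ ∧
        Tendsto (fun l => (S (φ l), V (φ l))) atTop (𝓝 (Sstar, Vstar))) →
      IsCWMin Y X lam Sstar Vstar) ∧
    Antitone (fun j => Fobj Y X lam (S j) (V j)) ∧
    ∃ (Sstar : Matrix (Fin p) (Fin k) ℝ) (Vstar : Matrix (Fin n) (Fin k) ℝ),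
      IsCWMin Y X lam Sstar Vstar ∧
      Tendsto (fun j => Fobj Y X lam (S j) (V j)) atTop (𝓝 (Fobj Y X lam Sstar Vstar)) := by
  classical
  set Fs : ℕ → ℝ := fun j => Fobj Y X lam (S j) (V j) with hFsdef
  -- iterating the T map never increases F
  have hstepS : ∀ (j : ℕ) (β : ℕ) (S0 : Matrix (Fin p) (Fin k) ℝ),
      Fobj Y X lam ((Tmap Y X lam (V j))^[β] S0) (V j) ≤ Fobj Y X lam S0 (V j) := by
    intro j β
    induction β with
    | zero => intro S0; simp
    | succ b ih =>
        intro S0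
        rw [Function.iterate_succ_apply]
        refine le_trans (ih _) ?_
        have h1 := H.Fstep Y X hlam hX (hV j) S0
        have h2 := H.frobSq_nonneg (Tmap Y X lam (V j) S0 - S0)
        linarith
  have hdrop1 : ∀ j, Fobj Y X lam (S (j + 1)) (V j) ≤ Fs j := by
    intro j; rw [hSstep j]; exact hstepS j (α j) (S j)
  -- the V update never increases F
  have hdrop2 : ∀ j, Fobj Y X lam (S (j + 1)) (V (j + 1)) ≤ Fobj Y X lam (S (j + 1)) (V j) := by
    intro j
    have e1 := H.Fexpand Y X lam (S (j + 1)) (hV (j + 1))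
    have e2 := H.Fexpand Y X lam (S (j + 1)) (hV j)
    have s1 := H.ipswap Y X (S (j + 1)) (V (j + 1))
    have s2 := H.ipswap Y X (S (j + 1)) (V j)
    have t := hVmax j (V j) (hV j)
    rw [H.trace_eq_ip, H.trace_eq_ip] at t
    linarith
  have hanti : Antitone Fs :=
    antitone_nat_of_succ_le fun j => le_trans (hdrop2 j) (hdrop1 j)
  have hFnonneg : ∀ j, 0 ≤ Fs j := fun j => H.Fobj_nonneg Y X hlam (S j) (V j)
  have hbdd : BddBelow (Set.range Fs) := ⟨0, by rintro x ⟨j, rfl⟩; exact hFnonneg j⟩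
  set L := ⨅ j, Fs j with hLdef
  have hFlim : Tendsto Fs atTop (𝓝 L) := tendsto_atTop_ciInf hanti hbdd
  have hLle : ∀ j, L ≤ Fs j := fun j => ciInf_le hbdd j
  -- Part 1 : accumulation points are coordinatewise minima
  have part1 : ∀ (Sstar : Matrix (Fin p) (Fin k) ℝ) (Vstar : Matrix (Fin n) (Fin k) ℝ),
      (∃ φ : ℕ → ℕ, StrictMono φ ∧
        Tendsto (fun l => (S (φ l), V (φ l))) atTop (𝓝 (Sstar, Vstar))) →
      IsCWMin Y X lam Sstar Vstar ∧ Fobj Y X lam Sstar Vstar = L := by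
    rintro Sstar Vstar ⟨φ, hφ, hconv⟩
    have hSconv : Tendsto (fun l => S (φ l)) atTop (𝓝 Sstar) := by
      have h := (continuous_fst.tendsto ((Sstar, Vstar) :
        Matrix (Fin p) (Fin k) ℝ × Matrix (Fin n) (Fin k) ℝ)).comp hconv
      simpa [Function.comp_def] using h
    have hVconv : Tendsto (fun l => V (φ l)) atTop (𝓝 Vstar) := by
      have h := (continuous_snd.tendsto ((Sstar, Vstar) :
        Matrix (Fin p) (Fin k) ℝ × Matrix (Fin n) (Fin k) ℝ)).comp hconv
      simpa [Function.comp_def] using h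
    have hVorth : IsOrthCol Vstar := by
      have hc : Continuous fun W : Matrix (Fin n) (Fin k) ℝ => Wᵀ * W :=
        (continuous_id.matrix_transpose).matrix_mul continuous_id
      have h1 : Tendsto (fun l => (V (φ l))ᵀ * V (φ l)) atTop (𝓝 (Vstarᵀ * Vstar)) := by
        have h := (hc.tendsto Vstar).comp hVconv
        simpa [Function.comp_def] using h
      have h2 : (fun l => (V (φ l))ᵀ * V (φ l))
          = fun _ => (1 : Matrix (Fin k) (Fin k) ℝ) := funext fun l => hV (φ l)
      rw [h2] at h1
      exact tendsto_nhds_unique h1 tendsto_const_nhds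
    have hFstar : Fobj Y X lam Sstar Vstar = L := by
      have t1 : Tendsto (fun l => Fs (φ l)) atTop (𝓝 (Fobj Y X lam Sstar Vstar)) := by
        have h := ((H.Fobj_cont Y X lam).tendsto (Sstar, Vstar)).comp hconv
        simpa [Function.comp_def, hFsdef] using h
      have t2 : Tendsto (fun l => Fs (φ l)) atTop (𝓝 L) := by
        have h := hFlim.comp hφ.tendsto_atTop
        simpa [Function.comp_def] using h
      exact tendsto_nhds_unique t1 t2
    -- fixed point property
    set W : ℕ → Matrix (Fin p) (Fin k) ℝ := fun l => Tmap Y X lam (V (φ l)) (S (φ l)) with hWdef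
    have hWconv : Tendsto W atTop (𝓝 (Tmap Y X lam Vstar Sstar)) := by
      have h := ((H.Tmap_cont Y X hlam).tendsto (Sstar, Vstar)).comp hconv
      simpa [Function.comp_def, hWdef] using h
    have hlow : ∀ l, L ≤ Fobj Y X lam (W l) (V (φ l)) := by
      intro l
      have hα1 := (hα (φ l)).1
      have hiter : S (φ l + 1) = (Tmap Y X lam (V (φ l)))^[α (φ l) - 1] (W l) := by
        rw [hSstep (φ l)]
        conv_lhs => rw [show α (φ l) = (α (φ l) - 1) + 1 from (Nat.succ_pred_eq_of_pos hα1).symm]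
        rw [Function.iterate_succ_apply]
      calc L ≤ Fs (φ l + 1) := hLle _
        _ ≤ Fobj Y X lam (S (φ l + 1)) (V (φ l)) := hdrop2 (φ l)
        _ = Fobj Y X lam ((Tmap Y X lam (V (φ l)))^[α (φ l) - 1] (W l)) (V (φ l)) := by
            rw [hiter]
        _ ≤ Fobj Y X lam (W l) (V (φ l)) := hstepS (φ l) _ (W l)
    have hup : ∀ l, Fobj Y X lam (W l) (V (φ l)) + (1/2) * frobSq (W l - S (φ l)) ≤ Fs (φ l) :=
      fun l => H.Fstep Y X hlam hX (hV (φ l)) (S (φ l))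
    have hsq0 : Tendsto (fun l => frobSq (W l - S (φ l))) atTop (𝓝 0) := by
      have hg : Tendsto (fun l => 2 * (Fs (φ l) - L)) atTop (𝓝 (2 * (L - L))) := by
        have h0 : Tendsto (fun l => Fs (φ l)) atTop (𝓝 L) := by
          have h := hFlim.comp hφ.tendsto_atTop
          simpa [Function.comp_def] using h
        exact (h0.sub tendsto_const_nhds).const_mul 2
      rw [show (2 : ℝ) * (L - L) = 0 by ring] at hg
      refine squeeze_zero (fun l => H.frobSq_nonneg _) (fun l => ?_) hg
      have := hup l
      have := hlow l
      linarith
    have hWS : Tendsto (fun l => frobSq (W l - S (φ l))) atTop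
        (𝓝 (frobSq (Tmap Y X lam Vstar Sstar - Sstar))) := by
      have h := (H.frobSq_cont.tendsto (Tmap Y X lam Vstar Sstar - Sstar)).comp
        (hWconv.sub hSconv)
      simpa [Function.comp_def] using h
    have hfix : Tmap Y X lam Vstar Sstar = Sstar := by
      have h0 : frobSq (Tmap Y X lam Vstar Sstar - Sstar) = 0 :=
        tendsto_nhds_unique hWS hsq0
      have := H.frobSq_eq_zero h0
      rwa [sub_eq_zero] at this
    have hSmin := H.Ffix Y X hlam hVorth hfix
    have hVopt : ∀ V', IsOrthCol V' → Fobj Y X lam Sstar Vstar ≤ Fobj Y X lam Sstar V' := by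
      intro V' hV'
      have hineq : ∀ l, 1 ≤ l →
          H.ip (Yᵀ * X * S (φ l)) V' ≤ H.ip (Yᵀ * X * S (φ l)) (V (φ l)) := by
        intro l hl
        have hp : 1 ≤ φ l := le_trans hl hφ.le_apply
        obtain ⟨j, hj⟩ : ∃ j, φ l = j + 1 := ⟨φ l - 1, (Nat.succ_pred_eq_of_pos hp).symm⟩
        have t := hVmax j V' hV'
        rw [H.trace_eq_ip, H.trace_eq_ip, ← hj] at t
        exact t
      have t1 : Tendsto (fun l => H.ip (Yᵀ * X * S (φ l)) V') atTop
          (𝓝 (H.ip (Yᵀ * X * Sstar) V')) := by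
        have hc : Continuous fun A : Matrix (Fin p) (Fin k) ℝ => H.ip (Yᵀ * X * A) V' :=
          (H.ip_cont₁ V').comp (continuous_const.matrix_mul continuous_id)
        have h := (hc.tendsto Sstar).comp hSconv
        simpa [Function.comp_def] using h
      have t2 : Tendsto (fun l => H.ip (Yᵀ * X * S (φ l)) (V (φ l))) atTop
          (𝓝 (H.ip (Yᵀ * X * Sstar) Vstar)) := by
        have h := ((H.ipYXS_cont Y X).tendsto (Sstar, Vstar)).comp hconv
        simpa [Function.comp_def] using h
      have hle : H.ip (Yᵀ * X * Sstar) V' ≤ H.ip (Yᵀ * X * Sstar) Vstar :=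
        le_of_tendsto_of_tendsto t1 t2 (eventually_atTop.2 ⟨1, hineq⟩)
      have e1 := H.Fexpand Y X lam Sstar hV'
      have e2 := H.Fexpand Y X lam Sstar hVorth
      have s1 := H.ipswap Y X Sstar V'
      have s2 := H.ipswap Y X Sstar Vstar
      linarith
    exact ⟨⟨hVorth, hSmin, hVopt⟩, hFstar⟩
  refine ⟨fun Sstar Vstar h => (part1 Sstar Vstar h).1, hanti, ?_⟩
  -- existence of an accumulation point
  set R0 : ℝ := Fs 0 / lam with hR0
  have hSbound : ∀ j i l, S j i l ∈ Set.Icc (-R0) R0 := by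
    intro j i l
    have h1 : lam * norm21 (S j) ≤ Fs j := H.lam_norm21_le Y X lam (S j) (V j)
    have h2 : Fs j ≤ Fs 0 := hanti (Nat.zero_le j)
    have h3 : norm21 (S j) ≤ R0 := by
      rw [hR0, le_div_iff₀ hlam, mul_comm]; linarith
    have h4 : |S j i l| ≤ R0 :=
      le_trans (le_trans (H.abs_le_eNorm (S j i) l) (H.eNorm_le_norm21 (S j) i)) h3
    exact Set.mem_Icc.2 (abs_le.1 h4)
  have hVbound : ∀ j i l, V j i l ∈ Set.Icc (-(1:ℝ)) 1 := fun j i l =>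
    Set.mem_Icc.2 (abs_le.1 (H.orth_entry_le (hV j) i l))
  set K : Set (Matrix (Fin p) (Fin k) ℝ × Matrix (Fin n) (Fin k) ℝ) :=
    (Set.univ.pi fun _ : Fin p => Set.univ.pi fun _ : Fin k => Set.Icc (-R0) R0) ×ˢ
    (Set.univ.pi fun _ : Fin n => Set.univ.pi fun _ : Fin k => Set.Icc (-(1:ℝ)) 1) with hK
  have hKcomp : IsCompact K :=
    (isCompact_univ_pi fun _ => isCompact_univ_pi fun _ => isCompact_Icc).prod
      (isCompact_univ_pi fun _ => isCompact_univ_pi fun _ => isCompact_Icc)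
  have hmem : ∀ j, (S j, V j) ∈ K := by
    intro j
    constructor
    · exact fun i _ => fun l _ => hSbound j i l
    · exact fun i _ => fun l _ => hVbound j i l
  letI : FirstCountableTopology (Matrix (Fin p) (Fin k) ℝ × Matrix (Fin n) (Fin k) ℝ) :=
    inferInstanceAs (FirstCountableTopology ((Fin p → Fin k → ℝ) × (Fin n → Fin k → ℝ)))
  obtain ⟨q, hqK, φ, hφ, hconv⟩ := hKcomp.tendsto_subseq hmem
  have hconv' : Tendsto (fun l => (S (φ l), V (φ l))) atTop (𝓝 (q.1, q.2)) := by
    simpa [Function.comp_def] using hconv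
  obtain ⟨hCW, hFq⟩ := part1 q.1 q.2 ⟨φ, hφ, hconv'⟩
  exact ⟨q.1, q.2, hCW, by rw [hFq]; exact hFlim⟩


end
end

section
/- Let V be a nonnegative real-valued random variable and let μ ≥ 0, δ > 0 be such that P{V ≥ μ + t} ≤ exp(−t²/2) for all t > 0. Set ν = μ + δ. Then E[(V² − ν²)₊] ≤ 2(1 + μ/δ) exp(−δ²/2). -/
open MeasureTheory

/-- Tail-to-moment bound: if `P{V ≥ μ₀ + t} ≤ exp(−t²/2)` for all `t > 0` and `ν = μ₀ + δ`,
then `E[(V² − ν²)₊] ≤ 2(1 + μ₀/δ) exp(−δ²/2)`. -/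
theorem stmt9 {Ω : Type} [MeasurableSpace Ω] (μ : Measure Ω) [IsProbabilityMeasure μ]
    (V : Ω → ℝ) (hVmeas : Measurable V) (hVnonneg : ∀ ω, 0 ≤ V ω)
    (μ₀ δ : ℝ) (hμ₀ : 0 ≤ μ₀) (hδ : 0 < δ)
    (htail : ∀ t : ℝ, 0 < t →
      μ {ω | μ₀ + t ≤ V ω} ≤ ENNReal.ofReal (Real.exp (-t ^ 2 / 2))) :
    ∫ ω, max ((V ω) ^ 2 - (μ₀ + δ) ^ 2) 0 ∂μ ≤
      2 * (1 + μ₀ / δ) * Real.exp (-δ ^ 2 / 2) := by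
  set ν : ℝ := μ₀ + δ with hν_def
  have hν : 0 < ν := by positivity
  have hμ₀ν : μ₀ < ν := by simp [hν_def]; linarith
  set f : Ω → ℝ := fun ω => max ((V ω) ^ 2 - ν ^ 2) 0 with hf_def
  have f_nn : ∀ ω, 0 ≤ f ω := fun ω => le_max_right _ _
  have f_mble : Measurable f := ((hVmeas.pow_const 2).sub_const _).max measurable_const
  set c : ℝ := δ / (2 * ν) with hc_def
  have hc : 0 < c := by positivity
  -- layer cake
  have layer : ∫⁻ ω, ENNReal.ofReal (f ω) ∂μ = ∫⁻ t in Set.Ioi 0, μ {ω | t < f ω} :=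
    lintegral_eq_lintegral_meas_lt μ (Filter.Eventually.of_forall f_nn) f_mble.aemeasurable
  -- pointwise tail bound
  have ptw : ∀ t ∈ Set.Ioi (0:ℝ), μ {ω | t < f ω} ≤
      ENNReal.ofReal (Real.exp (-δ ^ 2 / 2) * Real.exp (-(c * t))) := by
    intro t ht
    simp only [Set.mem_Ioi] at ht
    set s : ℝ := Real.sqrt (ν ^ 2 + t) with hs_def
    have hs_nn : 0 ≤ s := Real.sqrt_nonneg _
    have hs2 : s ^ 2 = ν ^ 2 + t := Real.sq_sqrt (by nlinarith)
    have hsν : ν ≤ s := by nlinarith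
    have hsub : {ω | t < f ω} ⊆ {ω | μ₀ + (s - μ₀) ≤ V ω} := by
      intro ω hω
      simp only [Set.mem_setOf_eq] at hω ⊢
      have h1 : t < (V ω) ^ 2 - ν ^ 2 := lt_of_lt_of_le hω (by
        rcases max_cases ((V ω) ^ 2 - ν ^ 2) 0 with ⟨h, _⟩ | ⟨h, h2⟩
        · exact h.le
        · exfalso; simp only [hf_def, h] at hω; linarith)
      have hV := hVnonneg ω
      have : s ^ 2 ≤ (V ω) ^ 2 := by rw [hs2]; linarith
      nlinarith
    have hstail := htail (s - μ₀) (by linarith)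
    refine le_trans (le_trans (measure_mono hsub) hstail) ?_
    apply ENNReal.ofReal_le_ofReal
    rw [← Real.exp_add]
    apply Real.exp_le_exp.2
    have hte : t = s ^ 2 - ν ^ 2 := by linarith
    have hid : ν * ((s - μ₀) ^ 2 - δ ^ 2) - δ * t = μ₀ * (s - ν) ^ 2 := by
      rw [hte, hν_def]; ring
    have h1 : δ * t ≤ ν * ((s - μ₀) ^ 2 - δ ^ 2) := by
      nlinarith [mul_nonneg hμ₀ (sq_nonneg (s - ν)), hid]
    have h2 : c * t = (δ * t) / (2 * ν) := by rw [hc_def]; ring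
    have h3 : (δ * t) / (2 * ν) ≤ (ν * ((s - μ₀) ^ 2 - δ ^ 2)) / (2 * ν) := by
      gcongr
    have h4 : (ν * ((s - μ₀) ^ 2 - δ ^ 2)) / (2 * ν) = ((s - μ₀) ^ 2 - δ ^ 2) / 2 := by
      field_simp
    rw [h2] at *
    linarith [h3.trans_eq h4]
  -- integrability of the exponential bound
  have hint : IntegrableOn (fun t : ℝ => Real.exp (-δ ^ 2 / 2) * Real.exp (-(c * t)))
      (Set.Ioi 0) := by
    have h := (exp_neg_integrableOn_Ioi 0 hc).const_mul (Real.exp (-δ ^ 2 / 2))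
    simp only [neg_mul] at h
    exact h
  -- value of the integral
  have hval : ∫ t in Set.Ioi (0:ℝ), Real.exp (-δ ^ 2 / 2) * Real.exp (-(c * t))
      = Real.exp (-δ ^ 2 / 2) * c⁻¹ := by
    rw [MeasureTheory.integral_const_mul]
    congr 1
    have := integral_comp_mul_left_Ioi (fun x => Real.exp (-x)) 0 hc
    simp only [mul_zero, smul_eq_mul] at this
    rw [this, integral_exp_neg_Ioi]
    simp
  have key : ∫⁻ ω, ENNReal.ofReal (f ω) ∂μ ≤
      ENNReal.ofReal (2 * (1 + μ₀ / δ) * Real.exp (-δ ^ 2 / 2)) := by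
    rw [layer]
    calc ∫⁻ t in Set.Ioi 0, μ {ω | t < f ω}
        ≤ ∫⁻ t in Set.Ioi (0:ℝ),
            ENNReal.ofReal (Real.exp (-δ ^ 2 / 2) * Real.exp (-(c * t))) :=
          setLIntegral_mono (by fun_prop) ptw
      _ = ENNReal.ofReal (∫ t in Set.Ioi (0:ℝ),
            Real.exp (-δ ^ 2 / 2) * Real.exp (-(c * t))) := by
          rw [MeasureTheory.ofReal_integral_eq_lintegral_ofReal hint
            (Filter.Eventually.of_forall fun t => by positivity)]
      _ = ENNReal.ofReal (2 * (1 + μ₀ / δ) * Real.exp (-δ ^ 2 / 2)) := by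
          rw [hval]
          congr 1
          rw [hc_def, hν_def]
          field_simp
          ring
  have heq : ∫ ω, f ω ∂μ = (∫⁻ ω, ENNReal.ofReal (f ω) ∂μ).toReal :=
    integral_eq_lintegral_of_nonneg_ae (Filter.Eventually.of_forall f_nn)
      f_mble.aestronglyMeasurable
  calc ∫ ω, f ω ∂μ = (∫⁻ ω, ENNReal.ofReal (f ω) ∂μ).toReal := heq
    _ ≤ 2 * (1 + μ₀ / δ) * Real.exp (-δ ^ 2 / 2) :=
        ENNReal.toReal_le_of_le_ofReal (by positivity) key
end
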